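/- Let t ≥ 1, m ≥ 1 and d_1,…,d_{t−1} ≥ 1 be integers, and let T be the unlabeled rooted tree of depth t in which the root (at level t) has exactly 2m children and every vertex at level s ∈ {1,…,t−1} has exactly d_s children (leaves at level 0). Then Wick(T) — equivalently, the number of isomorphism classes of labelings of T with excess Δ = 0, i.e. the number of Δ = 0 labeled monomial tree isomorphism classes contributing to E[(x_i^t)^{2m}] when f_s(z) = c_s z^{d_s} — equals (2m−1)!! · (2d_{t−1}−1)!!^m · (2d_{t−2}−1)!!^{m·d_{t−1}} ⋯ (2d_1−1)!!^{m·d_{t−1}⋯d_2}; that is, Wick(T) = (2m−1)!! · ∏_{s=1}^{t−1} (2d_s−1)!!^{m·∏_{r=s+1}^{t−1} d_r}. -/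
import Mathlib


/-- A finite unlabeled rooted tree, graded by depth: every non-root vertex has a
parent one level closer to the root. -/
structure GradedTree where
  V : Type
  [instFintype : Fintype V]
  [instDecEq : DecidableEq V]
  root : V
  parent : V → V
  depthOf : V → ℕ
  parent_root : parent root = root
  depthOf_root : depthOf root = 0
  depthOf_parent : ∀ v, v ≠ root → depthOf v = depthOf (parent v) + 1

attribute [instance] GradedTree.instFintype GradedTree.instDecEq

namespace GradedTree

/-- A row-wise Wick pairing of a graded rooted tree, encoded as a fixed-point-free,
depth-preserving involution `σ` of the non-root vertices such that the parents of `v`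
and `σ v` are either equal or paired with each other.  (Pairing the vertices of each
level into unordered pairs `{v, σ v}` is exactly such an involution.) -/
def IsWickPairing (T : GradedTree) (σ : T.V → T.V) : Prop :=
  σ T.root = T.root ∧
  (∀ v, σ (σ v) = v) ∧
  (∀ v, v ≠ T.root → σ v ≠ v) ∧
  (∀ v, T.depthOf (σ v) = T.depthOf v) ∧
  (∀ v, v ≠ T.root → T.parent (σ v) = T.parent v ∨ T.parent (σ v) = σ (T.parent v))

/-- `Wick(T)`: the number of row-wise Wick pairings of `T`. -/
noncomputable def wick (T : GradedTree) : ℕ :=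
  Nat.card {σ : T.V → T.V // T.IsWickPairing σ}

/-- `T₁ ⋆ T₂`: the rooted tree obtained from the disjoint union of `T₁` and `T₂` by
identifying the two roots. -/
def star (T₁ T₂ : GradedTree) : GradedTree where
  V := T₁.V ⊕ {v : T₂.V // v ≠ T₂.root}
  root := Sum.inl T₁.root
  parent := fun v =>
    match v with
    | Sum.inl w => Sum.inl (T₁.parent w)
    | Sum.inr ⟨w, hw⟩ =>
        if hp : T₂.parent w = T₂.root then Sum.inl T₁.root
        else Sum.inr ⟨T₂.parent w, hp⟩
  depthOf := fun v =>
    match v with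
    | Sum.inl w => T₁.depthOf w
    | Sum.inr ⟨w, _⟩ => T₂.depthOf w
  parent_root := by simp [T₁.parent_root]
  depthOf_root := T₁.depthOf_root
  depthOf_parent := by
    rintro (w | ⟨w, hw⟩) hv
    · have hw' : w ≠ T₁.root := fun h => hv (by simp [h])
      simpa using T₁.depthOf_parent w hw'
    · by_cases hp : T₂.parent w = T₂.root
      · have h2 := T₂.depthOf_parent w hw
        rw [hp, T₂.depthOf_root] at h2
        simpa [hp, T₁.depthOf_root] using h2
      · simpa [hp] using T₂.depthOf_parent w hw

end GradedTree

section Helpers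
open Function Finset


lemma natCard_sigma {ι : Type} [Fintype ι] (M : ι → Type) [∀ i, Finite (M i)] :
    Nat.card (Σ i, M i) = ∑ i, Nat.card (M i) := by
  letI : ∀ i, Fintype (M i) := fun i => Fintype.ofFinite _
  simp [Nat.card_eq_fintype_card, Fintype.card_sigma]

lemma natCard_eq_sum_fibers {X J : Type} [Finite X] [Fintype J] (φ : X → J) :
    Nat.card X = ∑ j, Nat.card {x : X // φ x = j} := by
  rw [← natCard_sigma]
  exact Nat.card_congr (Equiv.sigmaFiberEquiv φ).symm

lemma dfac_step (n : ℕ) :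
    Nat.doubleFactorial (2 * (n + 1) - 1) = (2 * n + 1) * Nat.doubleFactorial (2 * n - 1) := by
  rcases n with _ | j
  · simp [Nat.doubleFactorial]
  · have h1 : 2 * (j + 1 + 1) - 1 = (2 * (j+1) - 1) + 2 := by omega
    rw [h1, Nat.doubleFactorial]
    congr 1


def glueInv {α : Type} [DecidableEq α] (a b : α)
    (g : {c : α // c ≠ a ∧ c ≠ b} → {c : α // c ≠ a ∧ c ≠ b}) (c : α) : α :=
  if h1 : c = a then b else if h2 : c = b then a else (g ⟨c, h1, h2⟩).1

lemma glueInv_a {α : Type} [DecidableEq α] (a b : α)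
    (g : {c : α // c ≠ a ∧ c ≠ b} → {c : α // c ≠ a ∧ c ≠ b}) :
    glueInv a b g a = b := by
  unfold glueInv; rw [dif_pos rfl]

lemma glueInv_b {α : Type} [DecidableEq α] (a b : α) (hba : b ≠ a)
    (g : {c : α // c ≠ a ∧ c ≠ b} → {c : α // c ≠ a ∧ c ≠ b}) :
    glueInv a b g b = a := by
  unfold glueInv; rw [dif_neg hba, dif_pos rfl]

lemma glueInv_other {α : Type} [DecidableEq α] (a b : α)
    (g : {c : α // c ≠ a ∧ c ≠ b} → {c : α // c ≠ a ∧ c ≠ b})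
    (c : α) (h1 : c ≠ a) (h2 : c ≠ b) :
    glueInv a b g c = (g ⟨c, h1, h2⟩).1 := by
  unfold glueInv; rw [dif_neg h1, dif_neg h2]

theorem card_matchings : ∀ (k : ℕ) (α : Type) [Fintype α] [DecidableEq α],
    Nat.card α = 2 * k →
    Nat.card {f : α → α // Function.Involutive f ∧ ∀ a, f a ≠ a} =
      Nat.doubleFactorial (2 * k - 1) := by
  intro k
  induction k with
  | zero =>
    intro α _ _ h
    haveI : IsEmpty α := by
      rw [Nat.card_eq_fintype_card] at h
      exact Fintype.card_eq_zero_iff.mp (by omega)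
    haveI : Unique {f : α → α // Function.Involutive f ∧ ∀ a, f a ≠ a} :=
      { default := ⟨id, fun a => isEmptyElim a, fun a => isEmptyElim a⟩
        uniq := fun f => by
          apply Subtype.ext; funext a; exact isEmptyElim a }
    have : Nat.card {f : α → α // Function.Involutive f ∧ ∀ a, f a ≠ a} = 1 := Nat.card_unique
    simpa using this
  | succ n ih =>
    intro α _ _ h
    classical
    haveI : Nonempty α := by
      rw [Nat.card_eq_fintype_card] at h
      exact Fintype.card_pos_iff.mp (by omega)
    obtain ⟨a⟩ := ‹Nonempty α›
    set X := {f : α → α // Function.Involutive f ∧ ∀ a, f a ≠ a} with hX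
    have key : Nat.card X = ∑ b : {b : α // b ≠ a}, Nat.card {x : X // x.1 a = b.1} := by
      have := natCard_eq_sum_fibers (X := X) (J := {b : α // b ≠ a})
        (fun x => ⟨x.1 a, x.2.2 a⟩)
      rw [this]
      apply Finset.sum_congr rfl
      intro b _
      apply Nat.card_congr
      exact Equiv.subtypeEquivRight (fun x => by
        constructor
        · intro hh; exact congrArg Subtype.val hh
        · intro hh; exact Subtype.ext hh)
    -- fiber over b ≃ matchings of α \ {a, b}
    have fib : ∀ b : {b : α // b ≠ a}, Nat.card {x : X // x.1 a = b.1} =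
        Nat.doubleFactorial (2 * n - 1) := by
      intro b
      set γ := {c : α // c ≠ a ∧ c ≠ b.1} with hγ
      have hcard : Nat.card γ = 2 * n := by
        rw [Nat.card_eq_fintype_card]
        have : Fintype.card γ = Fintype.card α - Fintype.card {c : α // c = a ∨ c = b.1} := by
          rw [← Fintype.card_subtype_compl]
          apply Fintype.card_congr
          exact Equiv.subtypeEquivRight (fun c => by push_neg; tauto)
        rw [this]
        have h2 : Fintype.card {c : α // c = a ∨ c = b.1} = 2 := by
          rw [Fintype.card_subtype]
          have : Finset.univ.filter (fun c => c = a ∨ c = b.1) = {a, b.1} := by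
            ext c; simp [or_comm]
          rw [this, Finset.card_insert_of_notMem (by simp [Ne.symm b.2]), Finset.card_singleton]
        rw [h2, ← Nat.card_eq_fintype_card, h]
        omega
      have e : {x : X // x.1 a = b.1} ≃
          {g : γ → γ // Function.Involutive g ∧ ∀ c, g c ≠ c} := by
        refine
          { toFun := fun x => ⟨fun c => ⟨x.1.1 c.1, ?_, ?_⟩, ?_, ?_⟩
            invFun := fun g => ⟨⟨glueInv a b.1 g.1, ?_, ?_⟩, ?_⟩
            left_inv := ?_
            right_inv := ?_ }
        · -- x.1.1 c ≠ a
          intro hc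
          have : x.1.1 (x.1.1 c.1) = x.1.1 a := by rw [hc]
          rw [x.1.2.1 c.1, x.2] at this
          exact c.2.2 this
        · -- x.1.1 c ≠ b
          intro hc
          exact c.2.1 (x.1.2.1.injective (hc.trans x.2.symm))
        · intro c; apply Subtype.ext; exact x.1.2.1 c.1
        · intro c hc
          exact x.1.2.2 c.1 (congrArg Subtype.val hc)
        · -- involutive of glued map
          intro c
          by_cases h1 : c = a
          · rw [h1, glueInv_a, glueInv_b a b.1 b.2]
          · by_cases h2 : c = b.1
            · rw [h2, glueInv_b a b.1 b.2, glueInv_a]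
            · rw [glueInv_other a b.1 g.1 c h1 h2,
                glueInv_other a b.1 g.1 _ (g.1 ⟨c, h1, h2⟩).2.1 (g.1 ⟨c, h1, h2⟩).2.2]
              exact congrArg Subtype.val (g.2.1 ⟨c, h1, h2⟩)
        · -- fpf of glued map
          intro c
          by_cases h1 : c = a
          · rw [h1, glueInv_a]; exact b.2
          · by_cases h2 : c = b.1
            · rw [h2, glueInv_b a b.1 b.2]
              exact fun hh => h1 (h2.trans hh.symm)
            · rw [glueInv_other a b.1 g.1 c h1 h2]
              exact fun hh => (g.2.2 ⟨c, h1, h2⟩) (Subtype.ext hh)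
        · exact glueInv_a a b.1 g.1
        · -- left inverse
          intro x
          apply Subtype.ext; apply Subtype.ext
          show glueInv a b.1 _ = x.1.1
          funext c
          by_cases h1 : c = a
          · rw [h1, glueInv_a]; exact x.2.symm
          · by_cases h2 : c = b.1
            · rw [h2, glueInv_b a b.1 b.2]
              have hinv := x.1.2.1 a
              rw [x.2] at hinv
              exact hinv.symm
            · rw [glueInv_other a b.1 _ c h1 h2]
        · -- right inverse
          intro g
          apply Subtype.ext; funext c
          apply Subtype.ext
          show glueInv a b.1 g.1 c.1 = (g.1 c).1
          exact glueInv_other a b.1 g.1 c.1 c.2.1 c.2.2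
      rw [Nat.card_congr e]
      exact ih γ hcard
    rw [key]
    have hcb : Fintype.card {b : α // b ≠ a} = 2 * n + 1 := by
      rw [Fintype.card_subtype_compl, Fintype.card_subtype_eq, ← Nat.card_eq_fintype_card, h]
      omega
    rw [Finset.sum_congr rfl (fun b _ => fib b), Finset.sum_const, Finset.card_univ, hcb,
      dfac_step, smul_eq_mul]

lemma fiber_transport {α β : Type} (bl : α → β)
    (M : ∀ j : β, {a : α // bl a = j} → {a : α // bl a = j}) (j j' : β) (h : j = j')
    (a : α) (h1 : bl a = j) (h2 : bl a = j') :
    (M j ⟨a, h1⟩).1 = (M j' ⟨a, h2⟩).1 := by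
  cases h; rfl

theorem card_blocked_matchings {α β : Type} [Fintype α] [DecidableEq α]
    [Fintype β] [DecidableEq β]
    (bl : α → β) (n : ℕ) (hn : ∀ j, Nat.card {a : α // bl a = j} = 2 * n) :
    Nat.card {f : α → α // Function.Involutive f ∧ (∀ a, f a ≠ a) ∧ ∀ a, bl (f a) = bl a}
      = (Nat.doubleFactorial (2 * n - 1)) ^ (Nat.card β) := by
  classical
  have e : {f : α → α // Function.Involutive f ∧ (∀ a, f a ≠ a) ∧ ∀ a, bl (f a) = bl a} ≃
      (∀ j : β, {g : {a : α // bl a = j} → {a : α // bl a = j} //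
        Function.Involutive g ∧ ∀ c, g c ≠ c}) := by
    refine
      { toFun := fun f j => ⟨fun a => ⟨f.1 a.1, (f.2.2.2 a.1).trans a.2⟩, ?_, ?_⟩
        invFun := fun g => ⟨fun a => ((g (bl a)).1 ⟨a, rfl⟩).1, ?_, ?_, ?_⟩
        left_inv := ?_
        right_inv := ?_ }
    · intro c; apply Subtype.ext; exact f.2.1 c.1
    · intro c hc; exact f.2.2.1 c.1 (congrArg Subtype.val hc)
    · -- involutive
      intro a
      set u := (g (bl a)).1 ⟨a, rfl⟩ with hu
      show ((g (bl u.1)).1 ⟨u.1, rfl⟩).1 = a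
      have h1 := fiber_transport bl (fun j => (g j).1) (bl u.1) (bl a) u.2 u.1 rfl u.2
      rw [h1]
      have : (⟨u.1, u.2⟩ : {a' : α // bl a' = bl a}) = u := rfl
      rw [this, hu, (g (bl a)).2.1]
    · -- fpf
      intro a hfa
      exact (g (bl a)).2.2 ⟨a, rfl⟩ (Subtype.ext hfa)
    · -- block preserving
      intro a
      exact ((g (bl a)).1 ⟨a, rfl⟩).2
    · intro f
      apply Subtype.ext; funext a; rfl
    · intro g
      funext j
      apply Subtype.ext; funext a
      apply Subtype.ext
      show ((g (bl a.1)).1 ⟨a.1, rfl⟩).1 = ((g j).1 a).1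
      have h1 := fiber_transport bl (fun j => (g j).1) (bl a.1) j a.2 a.1 rfl a.2
      rw [h1]
  rw [Nat.card_congr e, Nat.card_pi]
  have : ∀ j : β, Nat.card {g : {a : α // bl a = j} → {a : α // bl a = j} //
      Function.Involutive g ∧ ∀ c, g c ≠ c} = Nat.doubleFactorial (2 * n - 1) :=
    fun j => card_matchings n _ (hn j)
  rw [Finset.prod_congr rfl (fun j _ => this j), Finset.prod_const, Finset.card_univ,
    Nat.card_eq_fintype_card]


lemma natCard_sigma' {ι : Type} [Fintype ι] (M : ι → Type) [∀ i, Finite (M i)] :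
    Nat.card (Σ i, M i) = ∑ i, Nat.card (M i) := by
  letI : ∀ i, Fintype (M i) := fun i => Fintype.ofFinite _
  simp [Nat.card_eq_fintype_card, Fintype.card_sigma]

lemma natCard_subtype_or_disjoint {γ : Type} [Finite γ] (p q : γ → Prop)
    (h : ∀ x, p x → q x → False) :
    Nat.card {x : γ // p x ∨ q x} = Nat.card {x : γ // p x} + Nat.card {x : γ // q x} := by
  classical
  rw [← Nat.card_sum]
  apply Nat.card_congr
  refine subtypeOrEquiv p q ?_
  rw [disjoint_iff]
  funext x
  simp only [Pi.inf_apply, Pi.bot_apply, inf_Prop_eq, eq_iff_iff]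
  constructor
  · rintro ⟨hx1, hx2⟩; exact (h x hx1 hx2).elim
  · rintro ⟨⟩

lemma natCard_subtype_eq_one {γ : Type} (y : γ) : Nat.card {x : γ // x = y} = 1 := by
  haveI : Unique {x : γ // x = y} := ⟨⟨⟨y, rfl⟩⟩, fun x => Subtype.ext x.2⟩
  exact Nat.card_unique

def pairSetoid {γ : Type} (ρ : γ → γ) (hρ : Function.Involutive ρ) : Setoid γ where
  r x y := x = y ∨ x = ρ y
  iseqv := by
    refine ⟨fun x => Or.inl rfl, ?_, ?_⟩
    · rintro x y (rfl | rfl)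
      · exact Or.inl rfl
      · exact Or.inr (hρ y).symm
    · rintro x y z (rfl | rfl) (rfl | h2)
      · exact Or.inl rfl
      · exact Or.inr h2
      · exact Or.inr rfl
      · rw [h2, hρ]; exact Or.inl rfl

lemma pairSetoid_quot_card {γ : Type} [Finite γ] (ρ : γ → γ) (hρ : Function.Involutive ρ)
    (hf : ∀ x, ρ x ≠ x) :
    Nat.card γ = 2 * Nat.card (Quotient (pairSetoid ρ hρ)) := by
  classical
  letI s := pairSetoid ρ hρ
  letI : Fintype γ := Fintype.ofFinite _
  letI : Fintype (Quotient s) := Quotient.fintype s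
  have h1 : Nat.card γ = ∑ q : Quotient s, Nat.card {x : γ // Quotient.mk s x = q} := by
    rw [← natCard_sigma']
    exact Nat.card_congr (Equiv.sigmaFiberEquiv (Quotient.mk s)).symm
  have h2 : ∀ q : Quotient s, Nat.card {x : γ // Quotient.mk s x = q} = 2 := by
    intro q
    obtain ⟨y, rfl⟩ := Quotient.exists_rep q
    have he : ∀ x : γ, (Quotient.mk s x = Quotient.mk s y) ↔ (x = y ∨ x = ρ y) := by
      intro x
      exact ⟨fun h => Quotient.exact h, fun h => Quotient.sound h⟩
    rw [Nat.card_congr (Equiv.subtypeEquivRight he)]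
    rw [natCard_subtype_or_disjoint _ _ (fun x hx1 hx2 => hf y (by rw [← hx2, hx1])),
      natCard_subtype_eq_one, natCard_subtype_eq_one]
  rw [h1, Finset.sum_congr rfl (fun q _ => h2 q), Finset.sum_const, Finset.card_univ,
    ← Nat.card_eq_fintype_card, smul_eq_mul, mul_comm]

def extRoot {V : Type} [DecidableEq V] (r : V)
    (f : {v : V // v ≠ r} → {v : V // v ≠ r}) (v : V) : V :=
  if h : v = r then r else (f ⟨v, h⟩).1

lemma extRoot_root {V : Type} [DecidableEq V] (r : V)
    (f : {v : V // v ≠ r} → {v : V // v ≠ r}) : extRoot r f r = r := by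
  unfold extRoot; rw [dif_pos rfl]

lemma extRoot_other {V : Type} [DecidableEq V] (r : V)
    (f : {v : V // v ≠ r} → {v : V // v ≠ r}) (v : V) (h : v ≠ r) :
    extRoot r f v = (f ⟨v, h⟩).1 := by
  unfold extRoot; rw [dif_neg h]

def glueLevels {V : Type} [DecidableEq V] (dep : V → ℕ) (t : ℕ)
    (τ : {v : V // dep v = t} → {v : V // dep v = t})
    (σ : {v : V // dep v < t} → {v : V // dep v < t})
    (hdep : ∀ v, dep v ≤ t) (v : V) : V :=
  if h : dep v = t then (τ ⟨v, h⟩).1 else (σ ⟨v, lt_of_le_of_ne (hdep v) h⟩).1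

lemma glueLevels_hi {V : Type} [DecidableEq V] (dep : V → ℕ) (t : ℕ)
    (τ : {v : V // dep v = t} → {v : V // dep v = t})
    (σ : {v : V // dep v < t} → {v : V // dep v < t})
    (hdep : ∀ v, dep v ≤ t) (v : V) (h : dep v = t) :
    glueLevels dep t τ σ hdep v = (τ ⟨v, h⟩).1 := by
  unfold glueLevels; rw [dif_pos h]

lemma glueLevels_lo {V : Type} [DecidableEq V] (dep : V → ℕ) (t : ℕ)
    (τ : {v : V // dep v = t} → {v : V // dep v = t})
    (σ : {v : V // dep v < t} → {v : V // dep v < t})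
    (hdep : ∀ v, dep v ≤ t) (v : V) (h : dep v < t) :
    glueLevels dep t τ σ hdep v = (σ ⟨v, h⟩).1 := by
  unfold glueLevels; rw [dif_neg (ne_of_lt h)]

lemma prod_Icc_shift (f : ℕ → ℕ) (a b : ℕ) :
    ∏ i ∈ Finset.Icc (a + 1) (b + 1), f i = ∏ i ∈ Finset.Icc a b, f (i + 1) := by
  rw [← Finset.Ico_add_one_right_eq_Icc, ← Finset.Ico_add_one_right_eq_Icc, Finset.prod_Ico_eq_prod_range,
    Finset.prod_Ico_eq_prod_range]
  have h : b + 1 + 1 - (a + 1) = b + 1 - a := by omega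
  rw [h]
  apply Finset.prod_congr rfl
  intro i _
  congr 1
  omega

end Helpers

namespace GradedTree

lemma eq_root_of_depth_zero (T : GradedTree) (v : T.V) (h : T.depthOf v = 0) : v = T.root := by
  by_contra hv
  have := T.depthOf_parent v hv
  omega

lemma ne_root_of_depth_pos (T : GradedTree) (v : T.V) (h : 0 < T.depthOf v) : v ≠ T.root := by
  intro hv; rw [hv, T.depthOf_root] at h; omega

lemma level_card (t m : ℕ) (ht : 1 ≤ t) (d : ℕ → ℕ) (T : GradedTree)
    (hroot : Nat.card {w : T.V // T.parent w = T.root ∧ w ≠ T.root} = 2 * m)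
    (hchild : ∀ v : T.V, v ≠ T.root → T.depthOf v < t →
      Nat.card {w : T.V // T.parent w = v ∧ w ≠ T.root} = d (t - T.depthOf v)) :
    ∀ ℓ, 1 ≤ ℓ → ℓ ≤ t → Nat.card {v : T.V // T.depthOf v = ℓ} =
      2 * m * ∏ r ∈ Finset.Ico (t - ℓ + 1) t, d r := by
  intro ℓ
  induction ℓ with
  | zero => omega
  | succ n ih =>
    intro _ hle
    rcases Nat.eq_zero_or_pos n with hn | hn
    · -- ℓ = 1
      subst hn
      have e : {v : T.V // T.depthOf v = 1} ≃ {w : T.V // T.parent w = T.root ∧ w ≠ T.root} := by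
        apply Equiv.subtypeEquivRight
        intro v
        constructor
        · intro h1
          have hv : v ≠ T.root := T.ne_root_of_depth_pos v (by omega)
          have := T.depthOf_parent v hv
          exact ⟨T.eq_root_of_depth_zero _ (by omega), hv⟩
        · rintro ⟨h1, h2⟩
          have := T.depthOf_parent v h2
          rw [h1, T.depthOf_root] at this
          omega
      rw [Nat.card_congr e, hroot]
      have : t - 1 + 1 = t := by omega
      rw [this, Finset.Ico_self, Finset.prod_empty, mul_one]
    · -- ℓ = n + 1, n ≥ 1
      classical
      have hnt : n < t := by omega
      set Lv := {v : T.V // T.depthOf v = n} with hLv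
      have hpar : ∀ v : {v : T.V // T.depthOf v = n + 1}, T.depthOf (T.parent v.1) = n := by
        intro v
        have hv : v.1 ≠ T.root := T.ne_root_of_depth_pos v.1 (by rw [v.2]; omega)
        have := T.depthOf_parent v.1 hv
        omega
      set φ : {v : T.V // T.depthOf v = n + 1} → Lv := fun v => ⟨T.parent v.1, hpar v⟩ with hφ
      have h1 : Nat.card {v : T.V // T.depthOf v = n + 1} =
          ∑ u : Lv, Nat.card {v : {v : T.V // T.depthOf v = n + 1} // φ v = u} := by
        rw [← natCard_sigma']
        exact Nat.card_congr (Equiv.sigmaFiberEquiv φ).symm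
      have h2 : ∀ u : Lv, Nat.card {v : {v : T.V // T.depthOf v = n + 1} // φ v = u} =
          d (t - n) := by
        intro u
        have e : {v : {v : T.V // T.depthOf v = n + 1} // φ v = u} ≃
            {w : T.V // T.parent w = u.1 ∧ w ≠ T.root} := by
          refine
            { toFun := fun v => ⟨v.1.1, ?_, ?_⟩
              invFun := fun w => ⟨⟨w.1, ?_⟩, ?_⟩
              left_inv := fun v => by apply Subtype.ext; apply Subtype.ext; rfl
              right_inv := fun w => by apply Subtype.ext; rfl }
          · exact congrArg Subtype.val v.2
          · exact T.ne_root_of_depth_pos v.1.1 (by rw [v.1.2]; omega)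
          · have := T.depthOf_parent w.1 w.2.2
            rw [w.2.1, u.2] at this
            exact this
          · apply Subtype.ext
            exact w.2.1
        rw [Nat.card_congr e]
        have hu : u.1 ≠ T.root := T.ne_root_of_depth_pos u.1 (by rw [u.2]; omega)
        have := hchild u.1 hu (by rw [u.2]; omega)
        rw [u.2] at this
        exact this
      rw [h1, Finset.sum_congr rfl (fun u _ => h2 u), Finset.sum_const, Finset.card_univ,
        ← Nat.card_eq_fintype_card, smul_eq_mul]
      rw [ih (by omega) (by omega)]
      have hsplit : ∏ r ∈ Finset.Ico (t - (n + 1) + 1) t, d r =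
          d (t - n) * ∏ r ∈ Finset.Ico (t - n + 1) t, d r := by
        have h3 : t - (n + 1) + 1 = t - n := by omega
        rw [h3, Finset.prod_eq_prod_Ico_succ_bot (by omega : t - n < t)]
      rw [hsplit]
      ring

end GradedTree

namespace GradedTree

lemma wick_depth_one (m : ℕ) (T : GradedTree)
    (hdepth : ∀ v : T.V, T.depthOf v ≤ 1)
    (hroot : Nat.card {w : T.V // T.parent w = T.root ∧ w ≠ T.root} = 2 * m) :
    T.wick = Nat.doubleFactorial (2 * m - 1) := by
  classical
  have hd1 : ∀ w : T.V, w ≠ T.root → T.depthOf w = 1 := by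
    intro w hw
    have h1 := T.depthOf_parent w hw
    have h2 := hdepth w
    omega
  have hp1 : ∀ w : T.V, w ≠ T.root → T.parent w = T.root := by
    intro w hw
    have h1 := T.depthOf_parent w hw
    have h2 := hd1 w hw
    exact T.eq_root_of_depth_zero _ (by omega)
  have e : {σ : T.V → T.V // T.IsWickPairing σ} ≃
      {f : {v : T.V // v ≠ T.root} → {v : T.V // v ≠ T.root} //
        Function.Involutive f ∧ ∀ a, f a ≠ a} := by
    refine
      { toFun := fun σ => ⟨fun v => ⟨σ.1 v.1, ?_⟩, ?_, ?_⟩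
        invFun := fun f => ⟨extRoot T.root f.1, ?_, ?_, ?_, ?_, ?_⟩
        left_inv := ?_
        right_inv := ?_ }
    · -- σ v ≠ root
      intro hh
      have : σ.1 (σ.1 v.1) = σ.1 T.root := by rw [hh]
      rw [σ.2.2.1, σ.2.1] at this
      exact v.2 this
    · intro v; apply Subtype.ext; exact σ.2.2.1 v.1
    · intro v hh; exact σ.2.2.2.1 v.1 v.2 (congrArg Subtype.val hh)
    · exact extRoot_root T.root f.1
    · -- involutive
      intro v
      by_cases h : v = T.root
      · rw [h, extRoot_root, extRoot_root]
      · rw [extRoot_other T.root f.1 v h,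
          extRoot_other T.root f.1 _ (f.1 ⟨v, h⟩).2]
        exact congrArg Subtype.val (f.2.1 ⟨v, h⟩)
    · -- fpf
      intro v hv
      rw [extRoot_other T.root f.1 v hv]
      exact fun hh => f.2.2 ⟨v, hv⟩ (Subtype.ext hh)
    · -- depth preserving
      intro v
      by_cases h : v = T.root
      · rw [h, extRoot_root]
      · rw [extRoot_other T.root f.1 v h, hd1 v h, hd1 _ (f.1 ⟨v, h⟩).2]
    · -- parent condition
      intro v hv
      left
      rw [extRoot_other T.root f.1 v hv, hp1 v hv, hp1 _ (f.1 ⟨v, hv⟩).2]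
    · -- left inverse
      intro σ
      apply Subtype.ext
      show extRoot T.root _ = σ.1
      funext v
      by_cases h : v = T.root
      · rw [h, extRoot_root]; exact σ.2.1.symm
      · rw [extRoot_other T.root _ v h]
    · -- right inverse
      intro f
      apply Subtype.ext
      funext v
      apply Subtype.ext
      show extRoot T.root f.1 v.1 = (f.1 v).1
      rw [extRoot_other T.root f.1 v.1 v.2]
  have hcard : Nat.card {v : T.V // v ≠ T.root} = 2 * m := by
    rw [← hroot]
    apply Nat.card_congr
    apply Equiv.subtypeEquivRight
    intro v
    constructor
    · intro hv; exact ⟨hp1 v hv, hv⟩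
    · exact fun hv => hv.2
  rw [wick, Nat.card_congr e]
  exact card_matchings m _ hcard

end GradedTree

namespace GradedTree

open Function

lemma wick_step (k m : ℕ) (hk : 1 ≤ k) (d : ℕ → ℕ)
    (T : GradedTree)
    (hdepth : ∀ v : T.V, T.depthOf v ≤ k + 1)
    (hroot : Nat.card {w : T.V // T.parent w = T.root ∧ w ≠ T.root} = 2 * m)
    (hchild : ∀ v : T.V, v ≠ T.root → T.depthOf v < k + 1 →
      Nat.card {w : T.V // T.parent w = v ∧ w ≠ T.root} = d (k + 1 - T.depthOf v)) :
    ∃ T' : GradedTree,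
      (∀ v : T'.V, T'.depthOf v ≤ k) ∧
      (Nat.card {w : T'.V // T'.parent w = T'.root ∧ w ≠ T'.root} = 2 * m) ∧
      (∀ v : T'.V, v ≠ T'.root → T'.depthOf v < k →
        Nat.card {w : T'.V // T'.parent w = v ∧ w ≠ T'.root} = d (k - T'.depthOf v + 1)) ∧
      T.wick = T'.wick *
        (Nat.doubleFactorial (2 * d 1 - 1)) ^ (m * ∏ r ∈ Finset.Icc 2 k, d r) := by
  classical
  let T' : GradedTree := {
            V := {v : T.V // T.depthOf v < k + 1}
            root := ⟨T.root, by rw [T.depthOf_root]; omega⟩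
            parent := fun v => ⟨T.parent v.1, by
              by_cases h : v.1 = T.root
              · rw [h, T.parent_root, T.depthOf_root]; omega
              · have h1 := T.depthOf_parent v.1 h
                have h2 := v.2
                omega⟩
            depthOf := fun v => T.depthOf v.1
            parent_root := Subtype.ext T.parent_root
            depthOf_root := T.depthOf_root
            depthOf_parent := fun v hv =>
              T.depthOf_parent v.1 (fun hh => hv (Subtype.ext hh)) }
  refine ⟨T', ?_, ?_, ?_, ?_⟩
  · -- depth bound
    exact fun v => Nat.lt_succ_iff.mp v.2
  · -- root children count
    rw [← hroot]
    apply Nat.card_congr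
    refine
      { toFun := fun w => ⟨w.1.1, congrArg Subtype.val w.2.1, fun e => w.2.2 (Subtype.ext e)⟩
        invFun := fun u => ⟨⟨u.1, ?_⟩, Subtype.ext u.2.1, fun e => u.2.2 (congrArg Subtype.val e)⟩
        left_inv := fun w => by apply Subtype.ext; apply Subtype.ext; rfl
        right_inv := fun u => by apply Subtype.ext; rfl }
    have h1 := T.depthOf_parent u.1 u.2.2
    rw [u.2.1, T.depthOf_root] at h1
    omega
  · -- children counts
    intro v hv hlt
    have hv1 : v.1 ≠ T.root := fun e => hv (Subtype.ext e)
    have hlt' : T.depthOf v.1 < k := hlt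
    have h2 := hchild v.1 hv1 (by omega)
    rw [show k + 1 - T.depthOf v.1 = k - T.depthOf v.1 + 1 from by omega] at h2
    rw [← h2]
    apply Nat.card_congr
    refine
      { toFun := fun w => ⟨w.1.1, congrArg Subtype.val w.2.1, fun e => w.2.2 (Subtype.ext e)⟩
        invFun := fun u => ⟨⟨u.1, ?_⟩, Subtype.ext u.2.1, fun e => u.2.2 (congrArg Subtype.val e)⟩
        left_inv := fun w => by apply Subtype.ext; apply Subtype.ext; rfl
        right_inv := fun u => by apply Subtype.ext; rfl }
    have h1 := T.depthOf_parent u.1 u.2.2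
    rw [u.2.1] at h1
    omega
  · -- the count
    have hLne : ∀ w : T.V, T.depthOf w = k + 1 → w ≠ T.root :=
      fun w h => T.ne_root_of_depth_pos w (by omega)
    have hparL : ∀ w : T.V, T.depthOf w = k + 1 → T.depthOf (T.parent w) = k := by
      intro w h
      have := T.depthOf_parent w (hLne w h)
      omega
    have hparLlt : ∀ w : T.V, T.depthOf w = k + 1 → T.depthOf (T.parent w) < k + 1 :=
      fun w h => by rw [hparL w h]; omega
    let L := {v : T.V // T.depthOf v = k + 1}
    let W' := {σ : T'.V → T'.V // T'.IsWickPairing σ}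
    let Bty : W' → Type := fun σ' =>
      {τ : L → L // Function.Involutive τ ∧ (∀ w, τ w ≠ w) ∧
        ∀ w : L, T.parent (τ w).1 = T.parent w.1 ∨
          T.parent (τ w).1 = (σ'.1 ⟨T.parent w.1, hparLlt w.1 w.2⟩).1}
    have E : {σ : T.V → T.V // T.IsWickPairing σ} ≃ Σ σ' : W', Bty σ' := by
      refine
        { toFun := fun σ => ⟨⟨fun v => ⟨σ.1 v.1, ?_⟩, ?_, ?_, ?_, ?_, ?_⟩,
            ⟨fun w => ⟨σ.1 w.1, ?_⟩, ?_, ?_, ?_⟩⟩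
          invFun := fun p => ⟨glueLevels T.depthOf (k + 1) p.2.1 p.1.1 hdepth, ?_, ?_, ?_, ?_, ?_⟩
          left_inv := ?_
          right_inv := ?_ }
      · rw [σ.2.2.2.2.1 v.1]; exact v.2
      · apply Subtype.ext; exact σ.2.1
      · intro v; apply Subtype.ext; exact σ.2.2.1 v.1
      · intro v hv hh
        exact σ.2.2.2.1 v.1 (fun e => hv (Subtype.ext e)) (congrArg Subtype.val hh)
      · intro v; exact σ.2.2.2.2.1 v.1
      · intro v hv
        rcases σ.2.2.2.2.2 v.1 (fun e => hv (Subtype.ext e)) with hc | hc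
        · left; exact Subtype.ext hc
        · right; exact Subtype.ext hc
      · rw [σ.2.2.2.2.1 w.1]; exact w.2
      · intro w; apply Subtype.ext; exact σ.2.2.1 w.1
      · intro w hh
        exact σ.2.2.2.1 w.1 (hLne w.1 w.2) (congrArg Subtype.val hh)
      · intro w
        rcases σ.2.2.2.2.2 w.1 (hLne w.1 w.2) with hc | hc
        · left; exact hc
        · right; exact hc
      · -- glue fixes root
        rw [glueLevels_lo T.depthOf (k + 1) p.2.1 p.1.1 hdepth T.root
          (by rw [T.depthOf_root]; omega)]
        exact congrArg Subtype.val p.1.2.1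
      · -- glue involutive
        intro v
        by_cases h : T.depthOf v = k + 1
        · rw [glueLevels_hi T.depthOf (k + 1) p.2.1 p.1.1 hdepth v h,
            glueLevels_hi T.depthOf (k + 1) p.2.1 p.1.1 hdepth _ (p.2.1 ⟨v, h⟩).2]
          exact congrArg Subtype.val (p.2.2.1 ⟨v, h⟩)
        · have hlt : T.depthOf v < k + 1 := lt_of_le_of_ne (hdepth v) h
          rw [glueLevels_lo T.depthOf (k + 1) p.2.1 p.1.1 hdepth v hlt,
            glueLevels_lo T.depthOf (k + 1) p.2.1 p.1.1 hdepth _ (p.1.1 ⟨v, hlt⟩).2]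
          exact congrArg Subtype.val (p.1.2.2.1 ⟨v, hlt⟩)
      · -- glue fpf
        intro v hv
        by_cases h : T.depthOf v = k + 1
        · rw [glueLevels_hi T.depthOf (k + 1) p.2.1 p.1.1 hdepth v h]
          exact fun hh => p.2.2.2.1 ⟨v, h⟩ (Subtype.ext hh)
        · have hlt : T.depthOf v < k + 1 := lt_of_le_of_ne (hdepth v) h
          rw [glueLevels_lo T.depthOf (k + 1) p.2.1 p.1.1 hdepth v hlt]
          exact fun hh => p.1.2.2.2.1 ⟨v, hlt⟩
            (fun e => hv (congrArg Subtype.val e)) (Subtype.ext hh)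
      · -- glue depth-preserving
        intro v
        by_cases h : T.depthOf v = k + 1
        · rw [glueLevels_hi T.depthOf (k + 1) p.2.1 p.1.1 hdepth v h, (p.2.1 ⟨v, h⟩).2, h]
        · have hlt : T.depthOf v < k + 1 := lt_of_le_of_ne (hdepth v) h
          rw [glueLevels_lo T.depthOf (k + 1) p.2.1 p.1.1 hdepth v hlt]
          exact p.1.2.2.2.2.1 ⟨v, hlt⟩
      · -- glue parent condition
        intro v hv
        by_cases h : T.depthOf v = k + 1
        · rw [glueLevels_hi T.depthOf (k + 1) p.2.1 p.1.1 hdepth v h]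
          rcases p.2.2.2.2 ⟨v, h⟩ with hc | hc
          · left; exact hc
          · right
            rw [glueLevels_lo T.depthOf (k + 1) p.2.1 p.1.1 hdepth (T.parent v)
              (hparLlt v h)]
            exact hc
        · have hlt : T.depthOf v < k + 1 := lt_of_le_of_ne (hdepth v) h
          rw [glueLevels_lo T.depthOf (k + 1) p.2.1 p.1.1 hdepth v hlt]
          rcases p.1.2.2.2.2.2 ⟨v, hlt⟩ (fun e => hv (congrArg Subtype.val e)) with hc | hc
          · left; exact congrArg Subtype.val hc
          · right
            rw [glueLevels_lo T.depthOf (k + 1) p.2.1 p.1.1 hdepth (T.parent v)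
              (by have := T.depthOf_parent v hv; omega)]
            exact congrArg Subtype.val hc
      · -- left inverse
        intro σ
        apply Subtype.ext
        show glueLevels T.depthOf (k + 1) _ _ hdepth = σ.1
        funext v
        by_cases h : T.depthOf v = k + 1
        · rw [glueLevels_hi T.depthOf (k + 1) _ _ hdepth v h]
        · rw [glueLevels_lo T.depthOf (k + 1) _ _ hdepth v (lt_of_le_of_ne (hdepth v) h)]
      · -- right inverse
        intro p
        refine Sigma.subtype_ext ?_ ?_
        · apply Subtype.ext
          funext v
          apply Subtype.ext
          show glueLevels T.depthOf (k + 1) p.2.1 p.1.1 hdepth v.1 = (p.1.1 v).1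
          rw [glueLevels_lo T.depthOf (k + 1) p.2.1 p.1.1 hdepth v.1 v.2]
        · funext w
          apply Subtype.ext
          show glueLevels T.depthOf (k + 1) p.2.1 p.1.1 hdepth w.1 = (p.2.1 w).1
          rw [glueLevels_hi T.depthOf (k + 1) p.2.1 p.1.1 hdepth w.1 w.2]
    -- cardinality of each fiber Bty σ'
    have hLvlt : ∀ x : {v : T.V // T.depthOf v = k}, T.depthOf x.1 < k + 1 :=
      fun x => by rw [x.2]; omega
    have hB : ∀ σ' : W', Nat.card (Bty σ') =
        (Nat.doubleFactorial (2 * d 1 - 1)) ^ (m * ∏ r ∈ Finset.Icc 2 k, d r) := by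
      intro σ'
      let Lv := {v : T.V // T.depthOf v = k}
      let ρ : Lv → Lv := fun x => ⟨(σ'.1 ⟨x.1, hLvlt x⟩).1,
        (σ'.2.2.2.2.1 ⟨x.1, hLvlt x⟩).trans x.2⟩
      have hρval : ∀ x : Lv, (ρ x).1 = (σ'.1 ⟨x.1, hLvlt x⟩).1 := fun x => rfl
      have hρinv : Function.Involutive ρ := by
        intro x
        apply Subtype.ext
        rw [hρval (ρ x)]
        have h9 : (⟨(ρ x).1, hLvlt (ρ x)⟩ : T'.V) = σ'.1 ⟨x.1, hLvlt x⟩ :=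
          Subtype.ext (hρval x)
        rw [h9]
        exact congrArg Subtype.val (σ'.2.2.1 ⟨x.1, hLvlt x⟩)
      have hρfpf : ∀ x, ρ x ≠ x := by
        intro x hh
        have hne : (⟨x.1, hLvlt x⟩ : T'.V) ≠ T'.root := by
          intro e
          have hx : x.1 = T.root := congrArg Subtype.val e
          have := x.2
          rw [hx, T.depthOf_root] at this
          omega
        exact σ'.2.2.2.1 ⟨x.1, hLvlt x⟩ hne
          (Subtype.ext ((hρval x).symm.trans (congrArg Subtype.val hh)))
      letI s := pairSetoid ρ hρinv
      letI : Fintype (Quotient s) := Fintype.ofFinite _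
      letI : DecidableEq (Quotient s) := Classical.decEq _
      let bl : L → Quotient s := fun w => Quotient.mk s ⟨T.parent w.1, hparL w.1 w.2⟩
      have econd : Bty σ' ≃ {τ : L → L // Function.Involutive τ ∧ (∀ w, τ w ≠ w) ∧
          ∀ w, bl (τ w) = bl w} := by
        apply Equiv.subtypeEquivRight
        intro τ
        apply and_congr_right; intro _
        apply and_congr_right; intro _
        apply forall_congr'; intro w
        constructor
        · intro hc
          apply Quotient.sound
          rcases hc with hc | hc
          · exact Or.inl (Subtype.ext hc)
          · exact Or.inr (Subtype.ext (hc.trans (hρval (⟨T.parent w.1, hparL w.1 w.2⟩ : Lv)).symm))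
        · intro hc
          rcases Quotient.exact hc with hc | hc
          · exact Or.inl (congrArg Subtype.val hc)
          · exact Or.inr ((congrArg Subtype.val hc).trans (hρval (⟨T.parent w.1, hparL w.1 w.2⟩ : Lv)))
      have hn : ∀ j : Quotient s, Nat.card {w : L // bl w = j} = 2 * d 1 := by
        intro j
        obtain ⟨v, rfl⟩ := Quotient.exists_rep j
        have e2 : {w : L // bl w = Quotient.mk s v} ≃
            {w : L // (⟨T.parent w.1, hparL w.1 w.2⟩ : Lv) = v ∨
              (⟨T.parent w.1, hparL w.1 w.2⟩ : Lv) = ρ v} :=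
          Equiv.subtypeEquivRight (fun w =>
            ⟨fun h => Quotient.exact h, fun h => Quotient.sound h⟩)
        rw [Nat.card_congr e2,
          natCard_subtype_or_disjoint _ _ (fun w h1 h2 => hρfpf v (by rw [← h2, h1]))]
        have c1 : ∀ u : Lv, Nat.card {w : L //
            (⟨T.parent w.1, hparL w.1 w.2⟩ : Lv) = u} = d 1 := by
          intro u
          have e3 : {w : L // (⟨T.parent w.1, hparL w.1 w.2⟩ : Lv) = u} ≃
              {w : T.V // T.parent w = u.1 ∧ w ≠ T.root} := by
            refine
              { toFun := fun w => ⟨w.1.1, congrArg Subtype.val w.2, hLne w.1.1 w.1.2⟩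
                invFun := fun w => ⟨⟨w.1, ?_⟩, ?_⟩
                left_inv := fun w => by apply Subtype.ext; apply Subtype.ext; rfl
                right_inv := fun w => by apply Subtype.ext; rfl }
            · have h1 := T.depthOf_parent w.1 w.2.2
              rw [w.2.1] at h1
              have h2 := u.2
              omega
            · apply Subtype.ext; exact w.2.1
          rw [Nat.card_congr e3]
          have h4 := hchild u.1 (T.ne_root_of_depth_pos u.1 (by rw [u.2]; omega)) (hLvlt u)
          rw [show k + 1 - T.depthOf u.1 = 1 from by rw [u.2]; omega] at h4
          exact h4
        rw [c1 v, c1 (ρ v)]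
        omega
      have hq : Nat.card (Quotient s) = m * ∏ r ∈ Finset.Icc 2 k, d r := by
        have h5 := pairSetoid_quot_card ρ hρinv hρfpf
        have h6 := T.level_card (k + 1) m (by omega) d hroot hchild k hk (by omega)
        rw [show k + 1 - k + 1 = 2 from by omega, Finset.Ico_add_one_right_eq_Icc] at h6
        apply Nat.eq_of_mul_eq_mul_left (show 0 < 2 by omega)
        rw [← h5, h6]
        ring
      rw [Nat.card_congr econd, card_blocked_matchings bl (d 1) hn, hq]
    -- put it together
    letI : Fintype W' := Fintype.ofFinite _
    have step1 : T.wick = Nat.card (Σ σ' : W', Bty σ') := by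
      rw [wick]; exact Nat.card_congr E
    have step2 : Nat.card (Σ σ' : W', Bty σ') = ∑ σ' : W', Nat.card (Bty σ') :=
      natCard_sigma' _
    have step3 : ∑ σ' : W', Nat.card (Bty σ') = Fintype.card W' *
        (Nat.doubleFactorial (2 * d 1 - 1)) ^ (m * ∏ r ∈ Finset.Icc 2 k, d r) := by
      rw [Finset.sum_congr rfl (fun σ' _ => hB σ'), Finset.sum_const, Finset.card_univ,
        smul_eq_mul]
    rw [step1, step2, step3, wick, Nat.card_eq_fintype_card]

end GradedTree

namespace GradedTree

theorem wick_aux (t : ℕ) : ∀ m : ℕ, 1 ≤ t → 1 ≤ m →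
    ∀ d : ℕ → ℕ, (∀ s, 1 ≤ s → s ≤ t - 1 → 1 ≤ d s) →
    ∀ T : GradedTree, (∀ v : T.V, T.depthOf v ≤ t) →
    Nat.card {w : T.V // T.parent w = T.root ∧ w ≠ T.root} = 2 * m →
    (∀ v : T.V, v ≠ T.root → T.depthOf v < t →
      Nat.card {w : T.V // T.parent w = v ∧ w ≠ T.root} = d (t - T.depthOf v)) →
    T.wick = Nat.doubleFactorial (2 * m - 1) *
      ∏ s ∈ Finset.Icc 1 (t - 1),
        (Nat.doubleFactorial (2 * d s - 1)) ^ (m * ∏ r ∈ Finset.Icc (s + 1) (t - 1), d r) := by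
  induction t with
  | zero => intro m ht; omega
  | succ k IH =>
    intro m ht hm d hd T hdepth hroot hchild
    rcases Nat.eq_zero_or_pos k with rfl | hk
    · -- depth-one base case
      have he : Finset.Icc 1 (0 + 1 - 1) = ∅ := Finset.Icc_eq_empty (by omega)
      rw [he, Finset.prod_empty, mul_one]
      exact wick_depth_one m T hdepth hroot
    · obtain ⟨T', hdepth', hroot', hchild', hwick⟩ := wick_step k m hk d T hdepth hroot hchild
      have hd' : ∀ s, 1 ≤ s → s ≤ k - 1 → 1 ≤ d (s + 1) := by
        intro s h1 h2
        exact hd (s + 1) (by omega) (by omega)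
      have IH' := IH m hk hm (fun s => d (s + 1)) hd' T' hdepth' hroot' hchild'
      rw [hwick, IH']
      have hkk : k + 1 - 1 = k := by omega
      rw [hkk]
      -- reindex the product from the induction hypothesis
      have e1 : ∏ s ∈ Finset.Icc 1 (k - 1),
          (Nat.doubleFactorial (2 * d (s + 1) - 1)) ^
            (m * ∏ r ∈ Finset.Icc (s + 1) (k - 1), d (r + 1)) =
          ∏ s ∈ Finset.Icc 2 k,
            (Nat.doubleFactorial (2 * d s - 1)) ^ (m * ∏ r ∈ Finset.Icc (s + 1) k, d r) := by
        rw [show Finset.Icc 2 k = Finset.Icc (1 + 1) ((k - 1) + 1) from by congr 1; omega,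
          prod_Icc_shift]
        apply Finset.prod_congr rfl
        intro s _
        have e0 : ∏ r ∈ Finset.Icc (s + 1) (k - 1), d (r + 1) =
            ∏ r ∈ Finset.Icc (s + 1 + 1) k, d r := by
          rw [show Finset.Icc (s + 1 + 1) k = Finset.Icc ((s + 1) + 1) ((k - 1) + 1) from by
            congr 1; omega, prod_Icc_shift]
        rw [e0]
      -- split off the s = 1 factor of the target product
      have e2 : ∏ s ∈ Finset.Icc 1 k,
          (Nat.doubleFactorial (2 * d s - 1)) ^ (m * ∏ r ∈ Finset.Icc (s + 1) k, d r) =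
          (Nat.doubleFactorial (2 * d 1 - 1)) ^ (m * ∏ r ∈ Finset.Icc 2 k, d r) *
          ∏ s ∈ Finset.Icc 2 k,
            (Nat.doubleFactorial (2 * d s - 1)) ^ (m * ∏ r ∈ Finset.Icc (s + 1) k, d r) := by
        rw [← Finset.Ico_add_one_right_eq_Icc, Finset.prod_eq_prod_Ico_succ_bot (show 1 < k + 1 by omega)]
        rw [Finset.Ico_add_one_right_eq_Icc]
      rw [e1, e2]
      ring

end GradedTree


/-- **Wick pairings of the regular monomial tree.**
Let `T` be the rooted tree of depth `t` in which the root (at level `t`, i.e. depth `0`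
from the root) has exactly `2m` children and every vertex at level `s ∈ {1,…,t-1}`
(i.e. at depth `t - s` from the root) has exactly `d_s` children, with all leaves at
level `0` (depth `t`).  Then the number of row-wise Wick pairings of `T` — equivalently,
the number of isomorphism classes of labelings of `T` with excess `Δ = 0`, i.e. the
number of `Δ = 0` labeled monomial trees contributing to `E[(x_i^t)^{2m}]` for the
monomial nonlinearities `f_s(z) = c_s z^{d_s}` — equals
`(2m-1)!! ∏_{s=1}^{t-1} (2 d_s - 1)!!^{m ∏_{r=s+1}^{t-1} d_r}`. -/
theorem wick_regular_tree (t m : ℕ) (ht : 1 ≤ t) (hm : 1 ≤ m)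
    (d : ℕ → ℕ) (hd : ∀ s, 1 ≤ s → s ≤ t - 1 → 1 ≤ d s)
    (T : GradedTree)
    (hdepth : ∀ v : T.V, T.depthOf v ≤ t)
    (hroot : Nat.card {w : T.V // T.parent w = T.root ∧ w ≠ T.root} = 2 * m)
    (hchild : ∀ v : T.V, v ≠ T.root → T.depthOf v < t →
      Nat.card {w : T.V // T.parent w = v ∧ w ≠ T.root} = d (t - T.depthOf v)) :
    T.wick = Nat.doubleFactorial (2 * m - 1) *
      ∏ s ∈ Finset.Icc 1 (t - 1),
        (Nat.doubleFactorial (2 * d s - 1)) ^ (m * ∏ r ∈ Finset.Icc (s + 1) (t - 1), d r) :=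
  GradedTree.wick_aux t m ht hm d hd T hdepth hroot hchild
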